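/- Let M be a finitely generated graded module of finite length over R = k[x_1,…,x_n] whose Hilbert series h_M(t) = Σ_j dim_k M_j t^j satisfies that the total length Σ_j dim_k M_j is odd. If β_{i,j}(M) denote the graded Betti numbers, so that h_M(t)·(1−t)^n = Σ_{i,j} (−1)^i β_{i,j}(M) t^j, then Σ_i β_i(M) ≥ 2^n, where β_i(M) = Σ_j β_{i,j}(M). -/
import Mathlib


open Polynomial in
/-- Odd-length case of the Total Rank Conjecture: if `M` is a finitely generated graded
module of finite length over `k[x_1,…,x_n]`, with Hilbert function `h j = dim_k M_j`
(nonzero only for `j ≤ r`) of odd total sum, and graded Betti numbers `β i j = β_{i,j}(M)`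
(nonzero only for `i ≤ n`, `j ≤ q`) satisfying the key identity
`h_M(t)·(1-t)^n = Σ_{i,j} (-1)^i β_{i,j} t^j`, then `Σ_i β_i(M) ≥ 2^n`. -/
theorem total_rank_odd_length (n r q : ℕ) (h : ℕ → ℕ) (β : ℕ → ℕ → ℕ)
    (hodd : Odd (∑ j ∈ Finset.range (r + 1), h j))
    (hkey : (∑ j ∈ Finset.range (r + 1), (C (h j : ℤ) * X ^ j)) * (1 - X) ^ n =
      ∑ i ∈ Finset.range (n + 1), ∑ j ∈ Finset.range (q + 1),
        (-1 : ℤ[X]) ^ i * (C (β i j : ℤ) * X ^ j)) :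
    2 ^ n ≤ ∑ i ∈ Finset.range (n + 1), ∑ j ∈ Finset.range (q + 1), β i j := by
  have hev := congrArg (Polynomial.eval (-1 : ℤ)) hkey
  simp only [eval_mul, eval_pow, eval_sub, eval_one, eval_X, eval_finset_sum, eval_C,
    eval_neg] at hev
  set A : ℤ := ∑ j ∈ Finset.range (r + 1), (h j : ℤ) * (-1) ^ j with hA
  have h2 : (1 : ℤ) - (-1) = 2 := by ring
  rw [h2] at hev
  -- A is odd
  have hAodd : Odd A := by
    have heven : Even ((∑ j ∈ Finset.range (r + 1), (h j : ℤ)) - A) := by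
      rw [hA, ← Finset.sum_sub_distrib]
      apply Finset.even_sum
      intro j _
      have : (h j : ℤ) - (h j : ℤ) * (-1) ^ j = (h j : ℤ) * (1 - (-1) ^ j) := by ring
      rw [this]
      apply Even.mul_left
      rcases Nat.even_or_odd j with hj | hj
      · simp [hj.neg_one_pow]
      · rw [hj.neg_one_pow]; exact ⟨1, by ring⟩
    have hSodd : Odd (∑ j ∈ Finset.range (r + 1), (h j : ℤ)) := by
      rw [← Nat.cast_sum]
      exact_mod_cast (Int.odd_coe_nat _).mpr hodd
    have := hSodd.sub_even heven
    simpa using this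
  have hA1 : 1 ≤ |A| := by
    have : A ≠ 0 := by intro hz; rw [hz] at hAodd; simp [Int.not_odd_iff_even] at hAodd
    exact Int.one_le_abs this
  have hB : |A * 2 ^ n| ≤ (∑ i ∈ Finset.range (n + 1), ∑ j ∈ Finset.range (q + 1), (β i j : ℤ)) := by
    rw [hev]
    calc |∑ i ∈ Finset.range (n + 1), ∑ j ∈ Finset.range (q + 1),
            (-1 : ℤ) ^ i * ((β i j : ℤ) * (-1) ^ j)|
        ≤ ∑ i ∈ Finset.range (n + 1), |∑ j ∈ Finset.range (q + 1),
            (-1 : ℤ) ^ i * ((β i j : ℤ) * (-1) ^ j)| := Finset.abs_sum_le_sum_abs _ _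
      _ ≤ ∑ i ∈ Finset.range (n + 1), ∑ j ∈ Finset.range (q + 1),
            |(-1 : ℤ) ^ i * ((β i j : ℤ) * (-1) ^ j)| := by
            exact Finset.sum_le_sum fun i _ => Finset.abs_sum_le_sum_abs _ _
      _ = ∑ i ∈ Finset.range (n + 1), ∑ j ∈ Finset.range (q + 1), (β i j : ℤ) := by
            refine Finset.sum_congr rfl fun i _ => Finset.sum_congr rfl fun j _ => ?_
            rw [abs_mul, abs_mul, abs_pow, abs_pow, abs_neg, abs_one, one_pow, one_pow,
              one_mul, mul_one, Int.abs_natCast]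
  have hlow : (2 : ℤ) ^ n ≤ |A * 2 ^ n| := by
    rw [abs_mul, abs_pow]
    calc (2 : ℤ) ^ n = 1 * |(2 : ℤ)| ^ n := by norm_num
      _ ≤ |A| * |(2 : ℤ)| ^ n := by
          apply mul_le_mul_of_nonneg_right hA1 (by positivity)
  have : (2 : ℤ) ^ n ≤ ∑ i ∈ Finset.range (n + 1), ∑ j ∈ Finset.range (q + 1), (β i j : ℤ) :=
    le_trans hlow hB
  exact_mod_cast this
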